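/- Let G be a group with finite generating set S and Cayley graph Γ, and let g, h ∈ G. If T : C(g) → C(h) is a weak cone equivalence (a graph isomorphism with T(g) = h), then for every edge {k₁,k₂} of C(g): if {k₁,k₂} is tangent then {T(k₁),T(k₂)} is tangent, if {k₁,k₂} is norm increasing from k₁ then {T(k₁),T(k₂)} is norm increasing from T(k₁), and if {k₁,k₂} is norm decreasing from k₁ then {T(k₁),T(k₂)} is norm decreasing from T(k₁). -/

import Mathlib

variable {G : Type*} [Group G]

noncomputable def wordLength (S : Set G) (g : G) : ℕ :=
  sInf {n | ∃ w : List G, (∀ x ∈ w, x ∈ S ∪ S⁻¹) ∧ w.length = n ∧ w.prod = g}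

def cayley (S : Set G) : SimpleGraph G where
  Adj g h := g ≠ h ∧ h * g⁻¹ ∈ S ∪ S⁻¹
  symm := by
    refine ⟨?_⟩
    rintro g h ⟨hne, hmem⟩
    refine ⟨hne.symm, ?_⟩
    have key : g * h⁻¹ = (h * g⁻¹)⁻¹ := by group
    rw [key]
    rcases hmem with h1 | h1
    · exact Or.inr (by simpa [Set.mem_inv] using h1)
    · exact Or.inl (by simpa [Set.mem_inv] using h1)
  loopless := ⟨fun g h => h.1 rfl⟩

def coneSet (S : Set G) (g : G) : Set G :=
  {h | wordLength S h = wordLength S g + (cayley S).dist g h}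

lemma self_mem_coneSet (S : Set G) (g : G) : g ∈ coneSet S g := by
  simp [coneSet]

lemma memSymm {S : Set G} {x : G} (hx : x ∈ S ∪ S⁻¹) : x⁻¹ ∈ S ∪ S⁻¹ := by
  rcases hx with h1 | h1
  · exact Or.inr (by simpa [Set.mem_inv] using h1)
  · exact Or.inl (by simpa [Set.mem_inv] using h1)

lemma exists_word (S : Set G) (hgen : Subgroup.closure S = ⊤) (g : G) :
    ∃ w : List G, (∀ x ∈ w, x ∈ S ∪ S⁻¹) ∧ w.prod = g := by
  have hg : g ∈ Subgroup.closure S := hgen ▸ Subgroup.mem_top g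
  induction hg using Subgroup.closure_induction with
  | mem x hx => exact ⟨[x], by simp [Or.inl hx], by simp⟩
  | one => exact ⟨[], by simp, by simp⟩
  | mul x y hx hy ihx ihy =>
      obtain ⟨w1, h1, p1⟩ := ihx; obtain ⟨w2, h2, p2⟩ := ihy
      refine ⟨w1 ++ w2, ?_, by simp [p1, p2]⟩
      intro z hz
      rcases List.mem_append.1 hz with hq | hq
      exacts [h1 z hq, h2 z hq]
  | inv x hx ihx =>
      obtain ⟨w, h1, p1⟩ := ihx
      refine ⟨(w.map fun x => x⁻¹).reverse, ?_, ?_⟩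
      · intro z hz
        simp only [List.mem_reverse, List.mem_map] at hz
        obtain ⟨a, ha, rfl⟩ := hz
        exact memSymm (h1 a ha)
      · rw [← List.prod_inv_reverse, p1]

lemma wordLength_le (S : Set G) {g : G} {w : List G} (hw : ∀ x ∈ w, x ∈ S ∪ S⁻¹)
    (hp : w.prod = g) : wordLength S g ≤ w.length :=
  Nat.sInf_le ⟨w, hw, rfl, hp⟩

lemma exists_min_word (S : Set G) (hgen : Subgroup.closure S = ⊤) (g : G) :
    ∃ w : List G, (∀ x ∈ w, x ∈ S ∪ S⁻¹) ∧ w.length = wordLength S g ∧ w.prod = g := by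
  obtain ⟨w, hw, hp⟩ := exists_word S hgen g
  have : wordLength S g ∈
      {n | ∃ w : List G, (∀ x ∈ w, x ∈ S ∪ S⁻¹) ∧ w.length = n ∧ w.prod = g} :=
    Nat.sInf_mem ⟨w.length, w, hw, rfl, hp⟩
  exact this

lemma wordLength_mul_le (S : Set G) (hgen : Subgroup.closure S = ⊤) (a b : G) :
    wordLength S (a * b) ≤ wordLength S a + wordLength S b := by
  obtain ⟨wa, ha, la, pa⟩ := exists_min_word S hgen a
  obtain ⟨wb, hb, lb, pb⟩ := exists_min_word S hgen b
  have := wordLength_le S (g := a * b) (w := wa ++ wb)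
    (by intro z hz; rcases List.mem_append.1 hz with h | h; exacts [ha z h, hb z h])
    (by simp [pa, pb])
  simpa [la, lb] using this

lemma reachable_aux (S : Set G) (w : List G) (hw : ∀ x ∈ w, x ∈ S ∪ S⁻¹) (a : G) :
    (cayley S).Reachable a (w.prod * a) := by
  induction w with
  | nil => simpa using SimpleGraph.Reachable.refl a
  | cons s t ih =>
      have h1 : (cayley S).Reachable a (t.prod * a) := ih (fun x hx => hw x (List.mem_cons_of_mem _ hx))
      have h2 : (cayley S).Reachable (t.prod * a) (s * (t.prod * a)) := by
        by_cases he : s * (t.prod * a) = t.prod * a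
        · rw [he]
        · refine SimpleGraph.Adj.reachable ⟨fun hc => he hc.symm, ?_⟩
          have : s * (t.prod * a) * (t.prod * a)⁻¹ = s := by group
          rw [this]
          exact hw s (List.mem_cons_self (a := s) (l := t))
      have : (s :: t).prod * a = s * (t.prod * a) := by simp [mul_assoc]
      rw [this]
      exact h1.trans h2

lemma cayley_reachable (S : Set G) (hgen : Subgroup.closure S = ⊤) (a b : G) :
    (cayley S).Reachable a b := by
  obtain ⟨w, hw, hp⟩ := exists_word S hgen (b * a⁻¹)
  have := reachable_aux S w hw a
  rw [hp] at this
  simpa using this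

lemma walk_word (S : Set G) : ∀ {a b : G} (p : (cayley S).Walk a b),
    ∃ w : List G, (∀ x ∈ w, x ∈ S ∪ S⁻¹) ∧ w.length = p.length ∧ w.prod * a = b := by
  intro a b p
  induction p with
  | nil => exact ⟨[], by simp, by simp, by simp⟩
  | @cons a c b hadj p ih =>
      obtain ⟨w, hw, hl, hp⟩ := ih
      refine ⟨w ++ [c * a⁻¹], ?_, by simp [hl], ?_⟩
      · intro z hz
        rcases List.mem_append.1 hz with h | h
        · exact hw z h
        · simp at h; subst h; exact hadj.2
      · rw [List.prod_append]
        simp only [List.prod_cons, List.prod_nil, mul_one]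
        rw [← hp]; group

lemma wordLength_sub_le_dist (S : Set G) (hgen : Subgroup.closure S = ⊤) (a b : G) :
    wordLength S (b * a⁻¹) ≤ (cayley S).dist a b := by
  obtain ⟨p, hp⟩ := (cayley_reachable S hgen a b).exists_walk_length_eq_dist
  obtain ⟨w, hw, hl, hprod⟩ := walk_word S p
  have : w.prod = b * a⁻¹ := by rw [← hprod]; group
  calc wordLength S (b * a⁻¹) ≤ w.length := wordLength_le S hw this
    _ = (cayley S).dist a b := by rw [hl, hp]

lemma wordLength_le_add_dist (S : Set G) (hgen : Subgroup.closure S = ⊤) (a b : G) :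
    wordLength S b ≤ wordLength S a + (cayley S).dist a b := by
  have h1 : wordLength S b ≤ wordLength S (b * a⁻¹) + wordLength S a := by
    have := wordLength_mul_le S hgen (b * a⁻¹) a
    simpa using this
  have h2 := wordLength_sub_le_dist S hgen a b
  omega
-- part 2 (appended to aux.lean for testing)
lemma geodesic_support_in_cone (S : Set G) (hgen : Subgroup.closure S = ⊤) {g k : G}
    (hk : k ∈ coneSet S g) (p : (cayley S).Walk g k) (hlen : p.length = (cayley S).dist g k)
    {m : G} (hm : m ∈ p.support) : m ∈ coneSet S g := by
  classical
  have hsplit := congr_arg SimpleGraph.Walk.length (p.take_spec hm)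
  rw [SimpleGraph.Walk.length_append] at hsplit
  have h1 : (cayley S).dist g m ≤ (p.takeUntil m hm).length := SimpleGraph.dist_le _
  have h2 : (cayley S).dist m k ≤ (p.dropUntil m hm).length := SimpleGraph.dist_le _
  have h3 := wordLength_le_add_dist S hgen g m
  have h4 := wordLength_le_add_dist S hgen m k
  have hk' : wordLength S k = wordLength S g + (cayley S).dist g k := hk
  show wordLength S m = wordLength S g + (cayley S).dist g m
  omega

lemma walk_in_induce (S : Set G) (s : Set G) : ∀ {a b : G} (p : (cayley S).Walk a b)
    (hp : ∀ m ∈ p.support, m ∈ s),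
    ∃ q : ((cayley S).induce s).Walk ⟨a, hp a p.start_mem_support⟩ ⟨b, hp b p.end_mem_support⟩,
      q.length = p.length := by
  intro a b p
  induction p with
  | nil => intro hp; exact ⟨SimpleGraph.Walk.nil, rfl⟩
  | @cons a c b hadj p ih =>
      intro hp
      have hc : ∀ m ∈ p.support, m ∈ s := fun m hm => hp m (by simp [hm])
      obtain ⟨q, hq⟩ := ih hc
      refine ⟨SimpleGraph.Walk.cons (by simpa using hadj) q, by simp [hq]⟩

lemma walk_out_induce (S : Set G) (s : Set G) : ∀ {a b : ↥s}
    (q : ((cayley S).induce s).Walk a b), ∃ p : (cayley S).Walk (a : G) (b : G),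
      p.length = q.length := by
  intro a b q
  induction q with
  | nil => exact ⟨SimpleGraph.Walk.nil, rfl⟩
  | @cons a c b hadj q ih =>
      obtain ⟨p, hp⟩ := ih
      exact ⟨SimpleGraph.Walk.cons (by simpa using hadj) p, by simp [hp]⟩

lemma cone_dist (S : Set G) (hgen : Subgroup.closure S = ⊤) (g : G) (k : coneSet S g) :
    ((cayley S).induce (coneSet S g)).dist ⟨g, self_mem_coneSet S g⟩ k = (cayley S).dist g k := by
  obtain ⟨p, hp⟩ := (cayley_reachable S hgen g k).exists_walk_length_eq_dist
  have hsup : ∀ m ∈ p.support, m ∈ coneSet S g :=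
    fun m hm => geodesic_support_in_cone S hgen k.2 p hp hm
  obtain ⟨q, hq⟩ := walk_in_induce S (coneSet S g) p hsup
  apply le_antisymm
  · have : ((cayley S).induce (coneSet S g)).dist ⟨g, _⟩ ⟨(k : G), _⟩ ≤ q.length :=
      SimpleGraph.dist_le q
    rw [hq, hp] at this
    simpa using this
  · have hreach : ((cayley S).induce (coneSet S g)).Reachable ⟨g, self_mem_coneSet S g⟩ k := by
      refine ⟨q.copy rfl ?_⟩
      simp
    obtain ⟨q', hq'⟩ := hreach.exists_walk_length_eq_dist
    obtain ⟨p', hp'⟩ := walk_out_induce S (coneSet S g) q'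
    have : (cayley S).dist g k ≤ p'.length := SimpleGraph.dist_le p'
    rw [hp', hq'] at this
    exact this

lemma iso_dist_le {V W : Type*} {A : SimpleGraph V} {B : SimpleGraph W} (f : A ≃g B) (a b : V) :
    B.dist (f a) (f b) ≤ A.dist a b := by
    by_cases hr : A.Reachable a b
    · obtain ⟨p, hp⟩ := hr.exists_walk_length_eq_dist
      have := SimpleGraph.dist_le (p.map f.toHom)
      rwa [SimpleGraph.Walk.length_map, hp] at this
    · rw [SimpleGraph.dist_eq_zero_of_not_reachable hr]
      by_cases hr' : B.Reachable (f a) (f b)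
      · exfalso
        obtain ⟨p⟩ := hr'
        have : A.Reachable (f.symm (f a)) (f.symm (f b)) := ⟨p.map f.symm.toHom⟩
        simp at this
        exact hr this
      · rw [SimpleGraph.dist_eq_zero_of_not_reachable hr']

lemma iso_dist {V W : Type*} {A : SimpleGraph V} {B : SimpleGraph W} (f : A ≃g B) (a b : V) :
    B.dist (f a) (f b) = A.dist a b := by
  have h1 : B.dist (f a) (f b) ≤ A.dist a b := iso_dist_le f a b
  have h2 : A.dist (f.symm (f a)) (f.symm (f b)) ≤ B.dist (f a) (f b) := iso_dist_le f.symm (f a) (f b)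
  simp only [RelIso.symm_apply_apply] at h2
  omega

/-- A weak cone equivalence maps tangent, norm increasing and norm decreasing edges of the
cone to tangent, norm increasing and norm decreasing edges respectively. -/
theorem weak_equivalence_preserves_edge_types
    (S : Set G) (hS : S.Finite) (hgen : Subgroup.closure S = ⊤) (g h : G)
    (T : (cayley S).induce (coneSet S g) ≃g (cayley S).induce (coneSet S h))
    (hT : ((T ⟨g, self_mem_coneSet S g⟩ : coneSet S h) : G) = h)
    (k₁ k₂ : coneSet S g)
    (hadj : ((cayley S).induce (coneSet S g)).Adj k₁ k₂) :
    (wordLength S (k₁ : G) = wordLength S (k₂ : G) →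
      wordLength S ((T k₁ : coneSet S h) : G) = wordLength S ((T k₂ : coneSet S h) : G)) ∧
    (wordLength S (k₂ : G) = wordLength S (k₁ : G) + 1 →
      wordLength S ((T k₂ : coneSet S h) : G) = wordLength S ((T k₁ : coneSet S h) : G) + 1) ∧
    (wordLength S (k₁ : G) = wordLength S (k₂ : G) + 1 →
      wordLength S ((T k₁ : coneSet S h) : G) = wordLength S ((T k₂ : coneSet S h) : G) + 1) := by
  have hgT : (⟨h, self_mem_coneSet S h⟩ : coneSet S h) = T ⟨g, self_mem_coneSet S g⟩ :=
    Subtype.ext hT.symm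
  -- word lengths in the g-cone
  have key : ∀ k : coneSet S g,
      wordLength S (k : G) =
        wordLength S g + ((cayley S).induce (coneSet S g)).dist ⟨g, self_mem_coneSet S g⟩ k ∧
      wordLength S ((T k : coneSet S h) : G) =
        wordLength S h + ((cayley S).induce (coneSet S g)).dist ⟨g, self_mem_coneSet S g⟩ k := by
    intro k
    constructor
    · rw [cone_dist S hgen g k]; exact k.2
    · have h1 : wordLength S ((T k : coneSet S h) : G) =
          wordLength S h + (cayley S).dist h ((T k : coneSet S h) : G) := (T k).2
      rw [h1, ← cone_dist S hgen h (T k), hgT, iso_dist T]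
  obtain ⟨a1, b1⟩ := key k₁
  obtain ⟨a2, b2⟩ := key k₂
  refine ⟨fun H => ?_, fun H => ?_, fun H => ?_⟩ <;> omega
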